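/- The Takagi function T is nowhere approximately derivable: for every x ∈ ℝ there is no real number L that is an approximate derivative of T at x. -/

import Mathlib

open MeasureTheory Filter Set

noncomputable section

/-- The set of dyadic numbers of level `n`: `{k / 2^n : k ∈ ℤ}`. -/
def Dset (n : ℕ) : Set ℝ := {y : ℝ | ∃ k : ℤ, y = (k : ℝ) / 2 ^ n}

/-- The set of all dyadic numbers. -/
def Ddyadic : Set ℝ := ⋃ n, Dset n

/-- `g k x = dist(x, D_k)`. -/
def g (k : ℕ) (x : ℝ) : ℝ := Metric.infDist x (Dset k)

/-- The Takagi function `T x = ∑_{k=1}^∞ g_k(x)`. -/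
def T (x : ℝ) : ℝ := ∑' k : ℕ, g (k + 1) x

/-- `G' n x = g_1'(x) + ⋯ + g_n'(x)` (so `G' 0 x = 0`). -/
def G' (n : ℕ) (x : ℝ) : ℝ := ∑ k ∈ Finset.range n, deriv (g (k + 1)) x

/-- `f` is approximately derivable at `x` with approximate derivative `L`:
for every `ε > 0`, the relative measure of the set of points `y` in `(x - r, x + r)`,
`y ≠ x`, where `|(f y - f x - L (y - x)) / (y - x)| ≥ ε`, divided by `2r`,
tends to `0` as `r → 0⁺`. -/
def ApproxDerivAt (f : ℝ → ℝ) (x L : ℝ) : Prop :=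
  ∀ ε > (0 : ℝ), Tendsto
    (fun r : ℝ => volume (Ioo (x - r) (x + r) ∩
        {y : ℝ | y ≠ x ∧ ε ≤ |(f y - f x - L * (y - x)) / (y - x)|}) /
      ENNReal.ofReal (2 * r))
    (nhdsWithin 0 (Ioi 0)) (nhds 0)

def phi (t : ℝ) : ℝ := |t - round t|

lemma phi_nonneg (t : ℝ) : 0 ≤ phi t := abs_nonneg _

lemma phi_le_half (t : ℝ) : phi t ≤ 1 / 2 := abs_sub_round t

lemma phi_min (t : ℝ) (n : ℤ) : phi t ≤ |t - n| := by
  rcases le_or_gt (1/2) |t - (n:ℝ)| with h | h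
  · exact (phi_le_half t).trans h
  · have h2 : |t - (round t : ℝ)| ≤ 1/2 := abs_sub_round t
    have h3 : |(n : ℝ) - round t| < 1 := by
      calc |(n:ℝ) - round t| = |((n:ℝ) - t) + (t - round t)| := by ring_nf
        _ ≤ |(n:ℝ) - t| + |t - round t| := abs_add_le _ _
        _ = |t - (n:ℝ)| + |t - round t| := by rw [abs_sub_comm]
        _ < 1 := by linarith
    have h4 : n = round t := by
      have h5 : |((n - round t : ℤ) : ℝ)| < 1 := by push_cast; convert h3 using 2
      have h6 : |n - round t| < 1 := by exact_mod_cast h5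
      rw [abs_lt] at h6; omega
    rw [phi, h4]

lemma abs_scale (c : ℝ) (j : ℕ) (w : ℝ) :
    |w - c / 2 ^ j| = |2 ^ j * w - c| / 2 ^ j := by
  have h2 : (0:ℝ) < 2 ^ j := by positivity
  rw [show (2:ℝ)^j*w - c = 2^j * (w - c/2^j) by field_simp, abs_mul, abs_of_pos h2]
  field_simp

lemma g_eq (j : ℕ) (w : ℝ) : g j w = phi (2 ^ j * w) / 2 ^ j := by
  have h2 : (0:ℝ) < 2 ^ j := by positivity
  have hne : (Dset j).Nonempty := ⟨0, ⟨0, by norm_num⟩⟩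
  have key : g j w = |w - (round ((2:ℝ)^j * w) : ℝ) / 2 ^ j| := by
    apply le_antisymm
    · have hm : ((round ((2:ℝ)^j * w) : ℝ) / 2 ^ j) ∈ Dset j := ⟨_, rfl⟩
      simpa [g, Real.dist_eq] using Metric.infDist_le_dist_of_mem hm
    · by_contra hlt
      push_neg at hlt
      obtain ⟨y, hy, hd⟩ := (Metric.infDist_lt_iff hne).1 hlt
      obtain ⟨k, rfl⟩ := hy
      rw [Real.dist_eq] at hd
      have h7 : |w - (round ((2:ℝ)^j * w) : ℝ) / 2 ^ j| ≤ |w - (k:ℝ)/2^j| := by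
        rw [abs_scale, abs_scale]
        have := phi_min ((2:ℝ)^j * w) k
        rw [phi] at this
        gcongr
      linarith
  rw [key, phi, abs_scale]

lemma phi_int_add (t : ℝ) (n : ℤ) : phi (t + n) = phi t := by
  unfold phi
  rw [round_add_intCast]
  push_cast
  ring_nf

lemma phi_neg (t : ℝ) : phi (-t) = phi t := by
  apply le_antisymm
  · calc phi (-t) ≤ |(-t) - (-round t : ℤ)| := phi_min _ _
      _ = |t - round t| := by push_cast; rw [← abs_neg]; ring_nf
      _ = phi t := rfl
  · calc phi t ≤ |t - (-round (-t) : ℤ)| := phi_min _ _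
      _ = |(-t) - round (-t)| := by push_cast; rw [← abs_neg]; ring_nf
      _ = phi (-t) := rfl

lemma phi_le_abs (t : ℝ) : phi t ≤ |t| := by simpa using phi_min t 0

lemma phi_lower (t : ℝ) : 1/2 - |t - 1/2| ≤ phi t := by
  unfold phi
  have h : (1:ℝ)/2 ≤ |(round t : ℝ) - 1/2| := by
    rcases le_or_gt (round t) 0 with h | h
    · have h0 : (round t : ℝ) ≤ 0 := by exact_mod_cast h
      rw [abs_sub_comm, abs_of_pos (by linarith : (0:ℝ) < 1/2 - round t)]
      linarith
    · have h1 : (1:ℤ) ≤ round t := h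
      have : (1:ℝ) ≤ round t := by exact_mod_cast h1
      rw [abs_of_pos (by linarith)]
      linarith
  calc 1/2 - |t - 1/2| ≤ |(round t : ℝ) - 1/2| - |t - 1/2| := by linarith
    _ ≤ |t - round t| := by
        have := abs_sub_abs_le_abs_sub ((round t : ℝ) - 1/2) (t - 1/2)
        rw [show (round t : ℝ) - 1/2 - (t - 1/2) = -(t - round t) by ring, abs_neg] at this
        linarith

lemma g_nonneg (j : ℕ) (y : ℝ) : 0 ≤ g j y := by
  rw [g_eq]; exact div_nonneg (phi_nonneg _) (by positivity)

lemma g_le_geom (j : ℕ) (y : ℝ) : g j y ≤ (1/2) * (1/2)^j := by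
  rw [g_eq]
  rw [div_le_iff₀ (by positivity)]
  calc phi (2^j * y) ≤ 1/2 := phi_le_half _
    _ = 1/2 * (1/2)^j * 2^j := by rw [mul_assoc, ← mul_pow]; norm_num

lemma g_le_self (j : ℕ) (y : ℝ) (hy : 0 ≤ y) : g j y ≤ y := by
  rw [g_eq, div_le_iff₀ (by positivity)]
  calc phi (2^j * y) ≤ |2^j * y| := phi_le_abs _
    _ = 2^j * y := abs_of_nonneg (by positivity)
    _ = y * 2^j := by ring

lemma summable_g (y : ℝ) : Summable (fun k : ℕ => g (k+1) y) := by
  have hb : Summable (fun k : ℕ => ((1:ℝ)/2)^k) :=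
    summable_geometric_of_lt_one (by norm_num) (by norm_num)
  refine Summable.of_nonneg_of_le (fun k => g_nonneg _ _) (fun k => ?_) hb
  calc g (k+1) y ≤ (1/2) * (1/2)^(k+1) := g_le_geom _ _
    _ ≤ (1/2)^k := by
        rw [pow_succ]
        have h : ((1:ℝ)/2)^k ≥ 0 := by positivity
        nlinarith

lemma T_nonneg (y : ℝ) : 0 ≤ T y := tsum_nonneg (fun k => g_nonneg _ _)

lemma T_le_half (y : ℝ) : T y ≤ 1/2 := by
  have h1 : T y ≤ ∑' k : ℕ, (1/4 : ℝ) * (1/2)^k := by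
    apply Summable.tsum_le_tsum _ (summable_g y)
      ((summable_geometric_of_lt_one (by norm_num) (by norm_num)).mul_left (1/4))
    intro k
    calc g (k+1) y ≤ (1/2) * (1/2)^(k+1) := g_le_geom _ _
      _ = (1/4) * (1/2)^k := by rw [pow_succ]; ring
  rw [tsum_mul_left, tsum_geometric_of_lt_one (by norm_num) (by norm_num)] at h1
  norm_num at h1
  linarith

lemma T_ge_g1 (y : ℝ) : g 1 y ≤ T y :=
  Summable.le_tsum (summable_g y) 0 (fun j _ => g_nonneg _ _)

lemma T_periodic (w : ℝ) (q : ℤ) : T (w + q/2) = T w := by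
  unfold T
  congr 1; funext k
  rw [g_eq, g_eq]
  congr 1
  have : (2:ℝ)^(k+1) * (w + q/2) = 2^(k+1) * w + ((q * 2^k : ℤ) : ℝ) := by
    push_cast
    rw [pow_succ]
    ring
  rw [this, phi_int_add]

lemma T_split (m : ℕ) (y : ℝ) :
    T y = (∑ k ∈ Finset.range m, g (k+1) y) + (2^m : ℝ)⁻¹ * T (2^m * y) := by
  have hs := summable_g y
  have h1 := Summable.sum_add_tsum_nat_add m hs
  unfold T
  rw [← h1]
  congr 1
  rw [← tsum_mul_left]
  congr 1; funext k
  rw [g_eq, g_eq]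
  rw [show (2:ℝ)^(k+1) * (2^m * y) = 2^(k+m+1) * y by rw [← mul_assoc, ← pow_add]; ring_nf]
  ring

lemma T_small (z : ℝ) (h0 : 0 ≤ z) : T z ≤ 8*z + (1/2)^9 := by
  have hs := T_split 8 z
  have h1 : (∑ k ∈ Finset.range 8, g (k+1) z) ≤ 8 * z := by
    calc (∑ k ∈ Finset.range 8, g (k+1) z) ≤ ∑ k ∈ Finset.range 8, z :=
          Finset.sum_le_sum (fun k _ => g_le_self (k+1) z h0)
      _ = 8 * z := by rw [Finset.sum_const, Finset.card_range, nsmul_eq_mul]; norm_num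
  have h2 : (2^8 : ℝ)⁻¹ * T (2^8 * z) ≤ (1/2)^9 := by
    calc (2^8 : ℝ)⁻¹ * T (2^8 * z) ≤ (2^8 : ℝ)⁻¹ * (1/2) := by
          have := T_le_half (2^8 * z)
          have h3 : (0:ℝ) < (2^8 : ℝ)⁻¹ := by norm_num
          nlinarith
      _ = (1/2)^9 := by norm_num
  linarith

lemma T_symm (z : ℝ) : T (1/2 - z) = T z := by
  unfold T
  congr 1; funext k
  rw [g_eq, g_eq]
  congr 1
  rw [show (2:ℝ)^(k+1) * (1/2 - z) = -(2^(k+1) * z) + ((2^k : ℤ) : ℝ) by push_cast; rw [pow_succ]; ring]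
  rw [phi_int_add, phi_neg]

lemma T_quarter (z : ℝ) : 1/4 - |z - 1/4| ≤ T z := by
  have h1 := T_ge_g1 z
  rw [g_eq] at h1
  have h2 := phi_lower (2^1 * z)
  have h3 : |2^1 * z - 1/2| = 2 * |z - 1/4| := by
    rw [show (2:ℝ)^1 * z - 1/2 = 2 * (z - 1/4) by ring, abs_mul]
    norm_num
  have h4 : (2:ℝ)^1 = 2 := by norm_num
  nlinarith [abs_nonneg (z - 1/4)]

lemma line_far (a b : ℝ) : ∃ u : ℝ, 0 ≤ u ∧ u + (1/2)^8 ≤ 1/2 ∧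
    ∀ z ∈ Icc u (u + (1/2)^8), 1/16 ≤ |T z - (a + b*z)| := by
  by_contra hcon
  push_neg at hcon
  obtain ⟨z1, hz1, he1⟩ := hcon 0 le_rfl (by norm_num)
  obtain ⟨z2, hz2, he2⟩ := hcon (1/4) (by norm_num) (by norm_num)
  obtain ⟨z3, hz3, he3⟩ := hcon (1/2 - (1/2)^8) (by norm_num) (by norm_num)
  simp only [zero_add, mem_Icc] at hz1 hz2 hz3
  -- T values
  have hT1 : T z1 ≤ 8 * (1/2)^8 + (1/2)^9 := by
    have := T_small z1 hz1.1
    linarith [hz1.2]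
  have hT3 : T z3 ≤ 8 * (1/2)^8 + (1/2)^9 := by
    have hsym : T z3 = T (1/2 - z3) := (T_symm z3).symm
    have hr : 0 ≤ 1/2 - z3 := by linarith [hz3.2]
    have := T_small (1/2 - z3) hr
    rw [hsym]
    have : T (1/2 - z3) ≤ 8 * (1/2 - z3) + (1/2)^9 := this
    have h5 : 1/2 - z3 ≤ (1/2)^8 := by linarith [hz3.1]
    linarith
  have hT2 : 1/4 - (1/2)^8 ≤ T z2 := by
    have := T_quarter z2
    have h6 : |z2 - 1/4| ≤ (1/2)^8 := by
      rw [abs_le]; constructor <;> [linarith [hz2.1]; linarith [hz2.2]]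
    linarith
  -- line between
  have hord1 : z1 ≤ z2 := by nlinarith [hz1.2, hz2.1]
  have hord2 : z2 ≤ z3 := by nlinarith [hz2.2, hz3.1]
  have hline : a + b * z2 ≤ max (a + b * z1) (a + b * z3) := by
    rcases le_or_gt 0 b with hb | hb
    · exact le_max_of_le_right (by nlinarith)
    · exact le_max_of_le_left (by nlinarith)
  have e1 := abs_lt.mp he1
  have e2 := abs_lt.mp he2
  have e3 := abs_lt.mp he3
  rcases max_cases (a + b * z1) (a + b * z3) with ⟨hm, _⟩ | ⟨hm, _⟩ <;> rw [hm] at hline <;> nlinarith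

lemma phi_affine (p : ℤ) : ∃ a b : ℝ, ∀ t ∈ Icc ((p:ℝ)/2) (((p:ℝ)+1)/2), phi t = a + b*t := by
  rcases Int.even_or_odd p with ⟨s, hs⟩ | ⟨s, hs⟩
  · refine ⟨-(s:ℝ), 1, fun t ht => ?_⟩
    rw [mem_Icc] at ht
    have hps : (p:ℝ) = 2*s := by rw [hs]; push_cast; ring
    have h1 : (s:ℝ) ≤ t := by rw [hps] at ht; linarith [ht.1]
    have h2 : t ≤ (s:ℝ) + 1/2 := by rw [hps] at ht; linarith [ht.2]
    have hub : phi t ≤ t - s := by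
      have := phi_min t s
      rw [abs_of_nonneg (by linarith)] at this
      linarith
    have hlb : t - (s:ℝ) ≤ phi t := by
      unfold phi
      set n := round t with hn
      rcases le_or_gt n s with h | h
      · have : (n:ℝ) ≤ s := by exact_mod_cast h
        rw [abs_of_nonneg (by linarith)]
        linarith
      · have : (s:ℝ) + 1 ≤ n := by exact_mod_cast h
        rw [abs_sub_comm, abs_of_nonneg (by linarith)]
        linarith
    have : phi t = t - s := le_antisymm hub hlb
    rw [this]; ring
  · refine ⟨(s:ℝ)+1, -1, fun t ht => ?_⟩
    rw [mem_Icc] at ht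
    have hps : (p:ℝ) = 2*s+1 := by rw [hs]; push_cast; ring
    have h1 : (s:ℝ) + 1/2 ≤ t := by rw [hps] at ht; linarith [ht.1]
    have h2 : t ≤ (s:ℝ) + 1 := by rw [hps] at ht; linarith [ht.2]
    have hub : phi t ≤ (s:ℝ) + 1 - t := by
      have := phi_min t (s+1)
      rw [show ((s+1 : ℤ):ℝ) = (s:ℝ)+1 by push_cast; ring] at this
      rw [abs_sub_comm, abs_of_nonneg (by linarith)] at this
      linarith
    have hlb : (s:ℝ) + 1 - t ≤ phi t := by
      unfold phi
      set n := round t with hn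
      rcases le_or_gt n s with h | h
      · have : (n:ℝ) ≤ s := by exact_mod_cast h
        rw [abs_of_nonneg (by linarith)]
        linarith
      · have : (s:ℝ) + 1 ≤ n := by exact_mod_cast h
        rw [abs_sub_comm, abs_of_nonneg (by linarith)]
        linarith
    have : phi t = (s:ℝ) + 1 - t := le_antisymm hub hlb
    rw [this]; ring

lemma g_affine (j m : ℕ) (hjm : j ≤ m) (q : ℤ) :
    ∃ a b : ℝ, ∀ y ∈ Icc ((q:ℝ)/2^(m+1)) (((q:ℝ)+1)/2^(m+1)), g j y = a + b*y := by
  set d : ℤ := 2^(m-j) with hd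
  have hd0 : (0:ℤ) < d := by positivity
  set p : ℤ := q / d with hp
  have h1 : p * d ≤ q := Int.ediv_mul_le q (by omega)
  have h2 : q < (p + 1) * d := by
    have := Int.lt_ediv_add_one_mul_self q hd0
    exact this
  have h2' : q + 1 ≤ (p + 1) * d := h2
  have hdr : ((d:ℝ)) = 2^(m-j) := by rw [hd]; push_cast; ring
  have hkey : (2:ℝ)^j * (2:ℝ)^(m-j) * 2 = 2^(m+1) := by
    rw [← pow_add]
    rw [show j + (m - j) = m by omega]
    rw [pow_succ]
  obtain ⟨a', b', hab⟩ := phi_affine p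
  refine ⟨a'/2^j, b', fun y hy => ?_⟩
  rw [mem_Icc] at hy
  have hy1 := hy.1
  have hy2 := hy.2
  have h2j : (0:ℝ) < 2^j := by positivity
  have h2m1 : (0:ℝ) < 2^(m+1) := by positivity
  have h2mj : (0:ℝ) < 2^(m-j) := by positivity
  have ht : (2:ℝ)^j * y ∈ Icc ((p:ℝ)/2) (((p:ℝ)+1)/2) := by
    constructor
    · have hq : (p:ℝ) * d ≤ q := by exact_mod_cast h1
      rw [hdr] at hq
      rw [div_le_iff₀ (by norm_num : (0:ℝ) < 2)]
      calc (p:ℝ) = (p * 2^(m-j)) / 2^(m-j) := by field_simp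
        _ ≤ (q:ℝ) / 2^(m-j) := by gcongr
        _ = (q:ℝ) * 2^j * 2 / 2^(m+1) := by rw [← hkey]; field_simp
        _ ≤ (2^j * y) * 2 := by
            rw [div_le_iff₀ h2m1] at *
            nlinarith [hy1, h2j]
    · have hq : ((q:ℝ) + 1) ≤ ((p:ℝ)+1) * 2^(m-j) := by
        have : ((q + 1 : ℤ):ℝ) ≤ (((p+1) * d : ℤ):ℝ) := by exact_mod_cast h2'
        push_cast at this
        rw [hdr] at this
        linarith
      rw [le_div_iff₀ (by norm_num : (0:ℝ) < 2)]
      calc (2:ℝ)^j * y * 2 ≤ 2^j * (((q:ℝ)+1)/2^(m+1)) * 2 := by nlinarith [hy2, h2j]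
        _ = ((q:ℝ)+1) / 2^(m-j) := by rw [← hkey]; field_simp
        _ ≤ (((p:ℝ)+1) * 2^(m-j)) / 2^(m-j) := by gcongr
        _ = (p:ℝ)+1 := by field_simp
  rw [g_eq, hab _ ht]
  field_simp

lemma sum_affine (I : Set ℝ) (m : ℕ) (f : ℕ → ℝ → ℝ)
    (h : ∀ k ∈ Finset.range m, ∃ a b : ℝ, ∀ y ∈ I, f k y = a + b*y) :
    ∃ a b : ℝ, ∀ y ∈ I, (∑ k ∈ Finset.range m, f k y) = a + b*y := by
  classical
  choose! a b hab using h
  refine ⟨∑ k ∈ Finset.range m, a k, ∑ k ∈ Finset.range m, b k, fun y hy => ?_⟩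
  rw [Finset.sum_congr rfl (fun k hk => hab k hk y hy), Finset.sum_add_distrib, ← Finset.sum_mul]

theorem takagi_nowhere_approx_derivable (x : ℝ) :
    ¬ ∃ L : ℝ, ApproxDerivAt T x L := by
  rintro ⟨L, hL⟩
  have htend := hL (1/8) (by norm_num)
  have key : ∀ m : ℕ, ENNReal.ofReal ((1/2:ℝ)^9) ≤
      volume (Ioo (x - (1/2)^m) (x + (1/2)^m) ∩
        {y : ℝ | y ≠ x ∧ 1/8 ≤ |(T y - T x - L * (y - x)) / (y - x)|}) /
      ENNReal.ofReal (2 * (1/2)^m) := by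
    intro m
    have h2m1 : (0:ℝ) < 2^(m+1) := by positivity
    have h2m : (0:ℝ) < (2:ℝ)^m := by positivity
    set q : ℤ := ⌊(2:ℝ)^(m+1) * x⌋ with hq
    set l : ℝ := (q:ℝ)/2^(m+1) with hl
    set I : Set ℝ := Icc ((q:ℝ)/2^(m+1)) (((q:ℝ)+1)/2^(m+1)) with hI
    have hx1 : l ≤ x := by
      rw [hl, div_le_iff₀ h2m1]
      have := Int.floor_le ((2:ℝ)^(m+1) * x)
      rw [← hq] at this
      linarith
    have hx2 : x < l + (2^(m+1):ℝ)⁻¹ := by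
      have hf := Int.lt_floor_add_one ((2:ℝ)^(m+1) * x)
      rw [← hq] at hf
      rw [hl, show (q:ℝ)/2^(m+1) + (2^(m+1):ℝ)⁻¹ = ((q:ℝ)+1)/2^(m+1) by field_simp,
        lt_div_iff₀ h2m1]
      linarith
    have hIeq : I = Icc l (l + (2^(m+1):ℝ)⁻¹) := by
      rw [hI, hl]
      congr 1
      field_simp
    have hxI : x ∈ I := by
      rw [hIeq]
      exact ⟨hx1, le_of_lt hx2⟩
    obtain ⟨aQ, bQ, hQ⟩ := sum_affine I m (fun k y => g (k+1) y)
      (fun k hk => g_affine (k+1) m (by have := Finset.mem_range.mp hk; omega) q)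
    have hdec : ∀ w ∈ I, T w = aQ + bQ*w + (2^m:ℝ)⁻¹ * T (2^m*(w - l)) := by
      intro w hw
      have h1 := T_split m w
      rw [hQ w hw] at h1
      rw [h1]
      congr 2
      rw [show (2:ℝ)^m * w = 2^m*(w - l) + (q:ℝ)/2 by rw [hl]; field_simp; ring]
      rw [T_periodic]
    obtain ⟨u, hu0, hu12, hfar⟩ :=
      line_far (T (2^m*(x-l)) - (L - bQ)*(2^m*(x-l))) (L - bQ)
    set c1 : ℝ := l + u/2^m with hc1
    set c2 : ℝ := l + (u + (1/2)^8)/2^m with hc2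
    have hδ : (0:ℝ) < (1/2)^8 := by norm_num
    have h6 : (1/2:ℝ)/2^m = (2^(m+1):ℝ)⁻¹ := by
      rw [pow_succ]
      rw [div_eq_inv_mul, mul_inv]
      ring
    have hsubI : Ioo c1 c2 ⊆ I := by
      rw [hIeq]
      intro y hy
      rw [mem_Ioo] at hy
      obtain ⟨hy1, hy2⟩ := hy
      rw [hc1] at hy1
      rw [hc2] at hy2
      have hup : (0:ℝ) ≤ u/2^m := by positivity
      have h5 : (u + (1/2)^8)/2^m ≤ (1/2)/2^m := by gcongr
      constructor
      · linarith
      · linarith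
    have hmain : ∀ y ∈ Ioo c1 c2, y ≠ x → 1/8 ≤ |(T y - T x - L * (y - x)) / (y - x)| := by
      intro y hy hyx
      have hyI := hsubI hy
      have hzU : 2^m * (y - l) ∈ Icc u (u + (1/2)^8) := by
        rw [mem_Ioo, hc1, hc2] at hy
        rw [mem_Icc]
        constructor
        · have h7 : u/2^m < y - l := by linarith [hy.1]
          have h8 := (div_lt_iff₀ h2m).mp h7
          linarith
        · have h7 : y - l < (u + (1/2)^8)/2^m := by linarith [hy.2]
          have h8 := (lt_div_iff₀ h2m).mp h7
          linarith
      have enum : T y - T x - L*(y - x) = (2^m:ℝ)⁻¹ *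
          (T (2^m*(y-l)) - ((T (2^m*(x-l)) - (L - bQ)*(2^m*(x-l))) + (L - bQ)*(2^m*(y-l)))) := by
        rw [hdec y hyI, hdec x hxI]
        field_simp
        ring
      have hfar' := hfar (2^m*(y-l)) hzU
      have hnum : (2^m:ℝ)⁻¹ * (1/16) ≤ |T y - T x - L*(y - x)| := by
        rw [enum, abs_mul, abs_of_pos (by positivity : (0:ℝ) < ((2:ℝ)^m)⁻¹)]
        gcongr
      have hden : |y - x| ≤ (2^(m+1):ℝ)⁻¹ := by
        rw [hIeq, mem_Icc] at hyI hxI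
        rw [abs_le]
        constructor
        · linarith [hyI.1, hxI.2]
        · linarith [hyI.2, hxI.1]
      have hdenpos : 0 < |y - x| := abs_pos.mpr (sub_ne_zero.mpr hyx)
      rw [abs_div, le_div_iff₀ hdenpos]
      calc (1:ℝ)/8 * |y - x| ≤ 1/8 * (2^(m+1):ℝ)⁻¹ := by gcongr
        _ = (2^m:ℝ)⁻¹ * (1/16) := by rw [pow_succ]; field_simp; ring
        _ ≤ |T y - T x - L*(y - x)| := hnum
    have hhalf : (2^(m+1):ℝ)⁻¹ < (1/2:ℝ)^m := by
      rw [show (1/2:ℝ)^m = ((2:ℝ)^m)⁻¹ by rw [one_div, inv_pow]]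
      apply inv_strictAnti₀ h2m
      rw [pow_succ]
      linarith
    have hsub2 : Ioo c1 c2 \ {x} ⊆ Ioo (x - (1/2)^m) (x + (1/2)^m) ∩
        {y : ℝ | y ≠ x ∧ 1/8 ≤ |(T y - T x - L * (y - x)) / (y - x)|} := by
      rintro y ⟨hy, hyx'⟩
      have hyx : y ≠ x := by simpa using hyx'
      refine ⟨?_, hyx, hmain y hy hyx⟩
      have hyI := hsubI hy
      rw [hIeq, mem_Icc] at hyI
      rw [mem_Ioo]
      constructor
      · have : x - (2^(m+1):ℝ)⁻¹ < l := by linarith [hx2]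
        linarith [hyI.1, hhalf]
      · have : l + (2^(m+1):ℝ)⁻¹ ≤ x + (2^(m+1):ℝ)⁻¹ := by linarith [hx1]
        linarith [hyI.2, hhalf]
    have hvol : ENNReal.ofReal ((1/2:ℝ)^8 * ((2:ℝ)^m)⁻¹) ≤
        volume (Ioo (x - (1/2)^m) (x + (1/2)^m) ∩
          {y : ℝ | y ≠ x ∧ 1/8 ≤ |(T y - T x - L * (y - x)) / (y - x)|}) := by
      calc ENNReal.ofReal ((1/2:ℝ)^8 * ((2:ℝ)^m)⁻¹) = volume (Ioo c1 c2) := by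
            rw [Real.volume_Ioo]
            congr 1
            rw [hc2, hc1]
            field_simp
            ring
        _ = volume (Ioo c1 c2 \ {x}) := (measure_diff_null (measure_singleton x)).symm
        _ ≤ _ := measure_mono hsub2
    calc ENNReal.ofReal ((1/2:ℝ)^9)
        = ENNReal.ofReal (((1/2:ℝ)^8 * ((2:ℝ)^m)⁻¹) / (2 * (1/2)^m)) := by
          congr 1
          rw [show (1/2:ℝ)^m = ((2:ℝ)^m)⁻¹ by rw [one_div, inv_pow]]
          field_simp
      _ = ENNReal.ofReal ((1/2:ℝ)^8 * ((2:ℝ)^m)⁻¹) / ENNReal.ofReal (2 * (1/2)^m) :=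
          by rw [ENNReal.ofReal_div_of_pos (show (0:ℝ) < 2*(1/2)^m by positivity)]
      _ ≤ _ := ENNReal.div_le_div_right hvol _
  have hseq : Tendsto (fun m : ℕ => ((1:ℝ)/2)^m) atTop (nhdsWithin 0 (Ioi 0)) := by
    apply tendsto_nhdsWithin_of_tendsto_nhds_of_eventually_within
    · exact tendsto_pow_atTop_nhds_zero_of_lt_one (by norm_num) (by norm_num)
    · exact Eventually.of_forall (fun m => mem_Ioi.mpr (by positivity))
  have hcomp := htend.comp hseq
  have hge := ge_of_tendsto' hcomp (fun m => key m)
  have hpos := ENNReal.ofReal_pos.mpr (show (0:ℝ) < (1/2)^9 by norm_num)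
  exact absurd hge (not_le.mpr hpos)
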